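/- arXiv:2005.13168 — 3 statements merged into one kernel-verified Lean document; each statement's English description precedes it below -/
import Mathlib

section
/- Let γ : ℝ → ℝ² be a C¹, L-periodic (L > 0), unit-speed curve with unit normal n(s) = J(γ'(s)). Then there exists ε > 0 such that for every closed interval I ⊆ ℝ of length at most ε on which γ is injective and which satisfies the separation bound on I (i.e. for all s, t ∈ I and each σ ∈ {+1, −1}, ‖γ(t) − (γ(s) + σ·n(s))‖ ≥ 1), the map Γ(s, t) = γ(s) + t·n(s) is injective on I × (−1, 1). -/
open scoped ENNReal

noncomputable section

/-- Rotation by π/2 in the plane: `J (x, y) = (-y, x)`. -/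
def J (v : EuclideanSpace ℝ (Fin 2)) : EuclideanSpace ℝ (Fin 2) := WithLp.toLp 2 ![-(v 1), v 0]

lemma J_inner (u v : EuclideanSpace ℝ (Fin 2)) :
    (inner ℝ (J u) (J v) : ℝ) = inner ℝ u v := by
  rw [EuclideanSpace.inner_eq_star_dotProduct, EuclideanSpace.inner_eq_star_dotProduct]
  simp [J, dotProduct, Fin.sum_univ_two]
  ring

lemma norm_J (v : EuclideanSpace ℝ (Fin 2)) : ‖J v‖ = ‖v‖ := by
  have h := J_inner v v
  rw [real_inner_self_eq_norm_sq, real_inner_self_eq_norm_sq] at h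
  nlinarith [norm_nonneg (J v), norm_nonneg v]

set_option maxHeartbeats 1000000 in
/-- **Local ribbon property** (Proposition 2.3).  For a C¹, `L`-periodic, unit-speed
plane curve `γ` with unit normal `n s = J (γ' s)`, there is `ε > 0` such that for every
closed interval `I` of length at most `ε` on which `γ` is injective and satisfies the
separation bound, the ribbon map `Γ (s, t) = γ s + t • n s` is injective on `I × (-1, 1)`. -/
theorem local_ribbon_injective
    (γ : ℝ → EuclideanSpace ℝ (Fin 2)) (L : ℝ) (hL : 0 < L)
    (hC1 : ContDiff ℝ 1 γ) (hper : Function.Periodic γ L)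
    (hunit : ∀ s, ‖deriv γ s‖ = 1) :
    ∃ ε > 0, ∀ a b : ℝ, a ≤ b → b - a ≤ ε →
      Set.InjOn γ (Set.Icc a b) →
      (∀ s ∈ Set.Icc a b, ∀ t ∈ Set.Icc a b, ∀ σ : ℝ, (σ = 1 ∨ σ = -1) →
        1 ≤ ‖γ t - (γ s + σ • J (deriv γ s))‖) →
      Set.InjOn (fun p : ℝ × ℝ => γ p.1 + p.2 • J (deriv γ p.1))
        (Set.Icc a b ×ˢ Set.Ioo (-1 : ℝ) 1) := by
  refine ⟨1, one_pos, ?_⟩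
  intro a b _hab _hba hinj hsep
  set n : ℝ → EuclideanSpace ℝ (Fin 2) := fun s => J (deriv γ s) with hn
  have hnorm : ∀ s, ‖n s‖ = 1 := fun s => by rw [hn]; rw [norm_J]; exact hunit s
  have hself : ∀ s, (inner ℝ (n s) (n s) : ℝ) = 1 := fun s => by
    rw [real_inner_self_eq_norm_sq, hnorm]; norm_num
  -- key consequence of separation bound
  have key : ∀ s ∈ Set.Icc a b, ∀ s' ∈ Set.Icc a b, ∀ σ : ℝ, (σ = 1 ∨ σ = -1) →
      2 * σ * (inner ℝ (γ s' - γ s) (n s) : ℝ) ≤ ‖γ s' - γ s‖ ^ 2 := by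
    intro s hs s' hs' σ hσ
    have h1 := hsep s hs s' hs' σ hσ
    have hrw : γ s' - (γ s + σ • n s) = (γ s' - γ s) - σ • n s := by abel
    rw [hrw] at h1
    have h2 : (1:ℝ) ≤ ‖(γ s' - γ s) - σ • n s‖ ^ 2 := by
      nlinarith [norm_nonneg ((γ s' - γ s) - σ • n s)]
    rw [norm_sub_sq_real] at h2
    have h3 : ‖σ • n s‖ ^ 2 = 1 := by
      rw [norm_smul, hnorm]
      rcases hσ with h | h <;> norm_num [h]
    have h4 : (inner ℝ (γ s' - γ s) (σ • n s) : ℝ) = σ * inner ℝ (γ s' - γ s) (n s) :=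
      real_inner_smul_right _ _ _
    nlinarith [h2, h3, h4]
  rintro ⟨s, t⟩ ⟨hs, ht⟩ ⟨s', t'⟩ ⟨hs', ht'⟩ heq
  simp only at heq hs ht hs' ht'
  have hv : γ s' - γ s = t • n s - t' • n s' := by
    have h : γ s + t • n s = γ s' + t' • n s' := heq
    rw [eq_comm, ← sub_eq_iff_eq_add] at h
    rw [← h]; abel
  obtain ⟨c, hc⟩ : ∃ c : ℝ, (inner ℝ (n s) (n s') : ℝ) = c := ⟨_, rfl⟩
  have hcomm : (inner ℝ (n s') (n s) : ℝ) = c := by rw [real_inner_comm]; exact hc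
  have hc1 : |c| ≤ 1 := by
    have := abs_real_inner_le_norm (n s) (n s')
    rwa [hnorm, hnorm, mul_one, hc] at this
  have hip : (inner ℝ (γ s' - γ s) (n s) : ℝ) = t - t' * c := by
    rw [hv, inner_sub_left, real_inner_smul_left, real_inner_smul_left, hself, hcomm]
    ring
  have hip' : (inner ℝ (γ s - γ s') (n s') : ℝ) = t' - t * c := by
    have h : γ s - γ s' = t' • n s' - t • n s := by rw [← neg_sub (γ s') (γ s), hv]; abel
    rw [h, inner_sub_left, real_inner_smul_left, real_inner_smul_left, hself, hc]
    ring
  have hip2 : (inner ℝ (γ s' - γ s) (n s') : ℝ) = -(t' - t * c) := by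
    have h := hip'
    rw [show γ s - γ s' = -(γ s' - γ s) from by abel, inner_neg_left] at h
    linarith
  have hipA : (inner ℝ (n s) (γ s' - γ s) : ℝ) = t - t' * c := by
    rw [real_inner_comm]; exact hip
  have hipB : (inner ℝ (n s') (γ s' - γ s) : ℝ) = -(t' - t * c) := by
    rw [real_inner_comm]; exact hip2
  have hR : ‖γ s' - γ s‖ ^ 2 = t ^ 2 + t' ^ 2 - 2 * t * t' * c := by
    rw [← real_inner_self_eq_norm_sq]
    nth_rewrite 1 [hv]
    rw [inner_sub_left, real_inner_smul_left, real_inner_smul_left, hipA, hipB]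
    ring
  have hR' : ‖γ s - γ s'‖ ^ 2 = t ^ 2 + t' ^ 2 - 2 * t * t' * c := by
    rw [← hR, show γ s - γ s' = -(γ s' - γ s) from by abel, norm_neg]
  -- the four separation inequalities
  have k1 := key s hs s' hs' 1 (Or.inl rfl)
  have k2 := key s hs s' hs' (-1) (Or.inr rfl)
  have k3 := key s' hs' s hs 1 (Or.inl rfl)
  have k4 := key s' hs' s hs (-1) (Or.inr rfl)
  rw [hip, hR] at k1 k2
  rw [hip', hR'] at k3 k4
  obtain ⟨ht1, ht2⟩ := ht
  obtain ⟨ht1', ht2'⟩ := ht'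
  obtain ⟨hcl, hcu⟩ := abs_le.mp hc1
  have h13 : (t + t') * (1 - c) ≤ t ^ 2 + t' ^ 2 - 2 * t * t' * c := by linarith [k1, k3]
  have h24 : (-(t + t')) * (1 - c) ≤ t ^ 2 + t' ^ 2 - 2 * t * t' * c := by linarith [k2, k4]
  have h14 : (t - t') * (1 + c) ≤ t ^ 2 + t' ^ 2 - 2 * t * t' * c := by linarith [k1, k4]
  have h23 : (-(t - t')) * (1 + c) ≤ t ^ 2 + t' ^ 2 - 2 * t * t' * c := by linarith [k2, k3]
  have hRle : t ^ 2 + t' ^ 2 - 2 * t * t' * c ≤ 0 := by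
    rcases le_total 0 (t - t') with ha | ha <;> rcases le_total 0 (t + t') with hb | hb
    · have e1 := mul_le_mul_of_nonneg_left h14 ha
      have e2 := mul_le_mul_of_nonneg_left h13 hb
      nlinarith [e1, e2, (show (0:ℝ) < 1 - t by linarith)]
    · have e1 := mul_le_mul_of_nonneg_left h14 ha
      have e2 := mul_le_mul_of_nonneg_left h24 (neg_nonneg.2 hb)
      nlinarith [e1, e2, (show (0:ℝ) < 1 + t' by linarith)]
    · have e1 := mul_le_mul_of_nonneg_left h23 (neg_nonneg.2 ha)
      have e2 := mul_le_mul_of_nonneg_left h13 hb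
      nlinarith [e1, e2, (show (0:ℝ) < 1 - t' by linarith)]
    · have e1 := mul_le_mul_of_nonneg_left h23 (neg_nonneg.2 ha)
      have e2 := mul_le_mul_of_nonneg_left h24 (neg_nonneg.2 hb)
      nlinarith [e1, e2, (show (0:ℝ) < 1 + t by linarith)]
  -- hence γ s = γ s'
  have hvz : γ s' = γ s := by
    have h0 : ‖γ s' - γ s‖ ^ 2 ≤ 0 := by rw [hR]; exact hRle
    have h1 : ‖γ s' - γ s‖ = 0 := by nlinarith [norm_nonneg (γ s' - γ s)]
    have := norm_eq_zero.mp h1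
    rwa [sub_eq_zero] at this
  have hss : s' = s := hinj hs' hs hvz
  subst hss
  have hnz : n s' ≠ 0 := fun h => by
    have h1 := hnorm s'; rw [h, norm_zero] at h1; norm_num at h1
  have heq2 : t • n s' = t' • n s' := add_left_cancel heq
  have htt : t = t' := by
    have h2 : (t - t') • n s' = 0 := by rw [sub_smul, heq2, sub_self]
    rcases smul_eq_zero.mp h2 with h | h
    · linarith [sub_eq_zero.mp h]
    · exact absurd h hnz
  rw [htt]

end
end

section
/- Let γ : [0,1] → ℝ² be a closed curve and let B₁, B₂ be open balls of radius 1 whose centres are at distance at least 2 from each other (so the balls are disjoint). If each of B₁ and B₂ is contained in some bounded complementary component of γ, then the length of γ is at least 4 + 2π. -/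
set_option maxHeartbeats 1000000

open scoped ENNReal
open Real intervalIntegral
open scoped RealInnerProductSpace

noncomputable section

/- ### Auxiliary lemmas -/

private lemma integral_abs_cos' : (∫ θ in (0:ℝ)..(2*π), |cos θ|) = 4 := by
  have hi : ∀ a b : ℝ, IntervalIntegrable (fun x => |cos x|) MeasureTheory.volume a b :=
    fun a b => (continuous_cos.abs).intervalIntegrable a b
  have h1 : (∫ θ in (0:ℝ)..(π/2), |cos θ|) = 1 := by
    rw [integral_congr (g := cos) ?_, integral_cos]
    · simp
    · intro x hx
      rw [Set.uIcc_of_le (by positivity)] at hx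
      exact abs_of_nonneg (cos_nonneg_of_mem_Icc ⟨by linarith [hx.1, pi_pos], hx.2⟩)
  have h2 : (∫ θ in (π/2)..(3*π/2), |cos θ|) = 2 := by
    rw [integral_congr (g := fun x => -cos x) ?_]
    · rw [integral_neg, integral_cos]
      have : sin (3*π/2) = -1 := by
        have : (3:ℝ)*π/2 = π + π/2 := by ring
        rw [this, sin_add]; simp
      rw [this]; norm_num
    · intro x hx
      rw [Set.uIcc_of_le (by linarith [pi_pos])] at hx
      exact abs_of_nonpos (cos_nonpos_of_pi_div_two_le_of_le hx.1 (by linarith [hx.2]))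
  have h3 : (∫ θ in (3*π/2)..(2*π), |cos θ|) = 1 := by
    rw [integral_congr (g := cos) ?_, integral_cos]
    · simp
      have : sin (3*π/2) = -1 := by
        have : (3:ℝ)*π/2 = π + π/2 := by ring
        rw [this, sin_add]; simp
      rw [this]; ring
    · intro x hx
      rw [Set.uIcc_of_le (by linarith [pi_pos])] at hx
      have : cos (2*π - x) = cos x := Real.cos_two_pi_sub x
      show |cos x| = cos x
      rw [abs_of_nonneg]
      rw [← this]
      exact cos_nonneg_of_mem_Icc ⟨by linarith [hx.2, pi_pos], by linarith [hx.1, pi_pos]⟩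
  have := integral_add_adjacent_intervals (a := (0:ℝ)) (b := π/2) (c := 3*π/2) (hi _ _) (hi _ _)
  have := integral_add_adjacent_intervals (a := (0:ℝ)) (b := 3*π/2) (c := 2*π) (hi _ _) (hi _ _)
  linarith [integral_add_adjacent_intervals (a := (0:ℝ)) (b := π/2) (c := 3*π/2) (hi _ _) (hi _ _),
    integral_add_adjacent_intervals (a := (0:ℝ)) (b := 3*π/2) (c := 2*π) (hi _ _) (hi _ _), h1, h2, h3]

private lemma key_integral' (a b : ℝ) :
    (∫ θ in (0:ℝ)..(2*π), |a * cos θ + b * sin θ|) = 4 * Real.sqrt (a^2 + b^2) := by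
  rcases eq_or_ne (a^2 + b^2) 0 with h0 | h0
  · have ha : a = 0 := by nlinarith [sq_nonneg a, sq_nonneg b]
    have hb : b = 0 := by nlinarith [sq_nonneg a, sq_nonneg b]
    simp [ha, hb]
  · set z : ℂ := ⟨a, b⟩ with hz
    have hzne : z ≠ 0 := by
      intro h
      apply h0
      have : a = 0 ∧ b = 0 := by
        constructor <;> [exact congrArg Complex.re h; exact congrArg Complex.im h]
      simp [this.1, this.2]
    set r := ‖z‖ with hr
    have hrpos : 0 < r := norm_pos_iff.mpr hzne
    have hcos : cos z.arg = a / r := Complex.cos_arg hzne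
    have hsin : sin z.arg = b / r := Complex.sin_arg z
    have hrs : r = Real.sqrt (a^2+b^2) := by
      rw [hr, Complex.norm_def, Complex.normSq_mk]; ring_nf
    have key : ∀ θ : ℝ, a * cos θ + b * sin θ = r * cos (θ - z.arg) := by
      intro θ
      rw [cos_sub, hcos, hsin]
      field_simp
    have hper : Function.Periodic (fun x : ℝ => |cos x|) (2*π) := fun x => by
      simp [Real.cos_add_two_pi]
    have hshift : (∫ θ in (0 - z.arg)..(2*π - z.arg), |cos θ|) = ∫ θ in (0:ℝ)..(2*π), |cos θ| := by
      have h := hper.intervalIntegral_add_eq (0 - z.arg) 0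
      rw [show (0 - z.arg)+2*π = 2*π - z.arg from by ring,
        show (0:ℝ)+2*π = 2*π from by ring] at h
      exact h
    have hcomp : (∫ θ in (0:ℝ)..(2*π), |cos (θ - z.arg)|) = ∫ θ in (0 - z.arg)..(2*π - z.arg), |cos θ| :=
      integral_comp_sub_right (fun x => |cos x|) z.arg
    calc ∫ θ in (0:ℝ)..(2*π), |a * cos θ + b * sin θ|
        = ∫ θ in (0:ℝ)..(2*π), r * |cos (θ - z.arg)| := by
          apply integral_congr
          intro x _
          show |a * cos x + b * sin x| = r * |cos (x - z.arg)|
          rw [key x, abs_mul, abs_of_pos hrpos]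
      _ = r * ∫ θ in (0:ℝ)..(2*π), |cos (θ - z.arg)| := by rw [integral_const_mul]
      _ = r * ∫ θ in (0:ℝ)..(2*π), |cos θ| := by rw [hcomp, hshift]
      _ = 4 * Real.sqrt (a^2+b^2) := by rw [integral_abs_cos', hrs]; ring

private lemma abs_telescope' (g : ℕ → ℝ) {p q : ℕ} (h : p ≤ q) :
    |g q - g p| ≤ ∑ i ∈ Finset.Ico p q, |g (i+1) - g i| := by
  induction q, h using Nat.le_induction with
  | base => simp
  | succ n hn ih =>
    rw [Finset.sum_Ico_succ_top (by omega)]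
    calc |g (n+1) - g p| ≤ |g n - g p| + |g (n+1) - g n| := by
          have := abs_add_le (g n - g p) (g (n+1) - g n)
          simpa [sub_add_sub_cancel'] using this
      _ ≤ _ := by linarith

private lemma grid_ineq' (g : ℕ → ℝ) (N j k : ℕ) (h0 : g 0 = g N) (hj : j ≤ N) (hk : k ≤ N) :
    2*(g j - g k) ≤ ∑ i ∈ Finset.range N, |g (i+1) - g i| := by
  rw [Finset.range_eq_Ico]
  rcases le_total j k with hjk | hkj
  · have s1 := Finset.sum_Ico_consecutive (fun i => |g (i+1) - g i|) (Nat.zero_le j) hjk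
    have s2 := Finset.sum_Ico_consecutive (fun i => |g (i+1) - g i|) (Nat.zero_le k) hk
    have e1 := abs_telescope' g (Nat.zero_le j)
    have e2 := abs_telescope' g hjk
    have e3 := abs_telescope' g hk
    have a1 : g j - g 0 ≤ |g j - g 0| := le_abs_self _
    have a2 : g j - g k ≤ |g k - g j| := by rw [abs_sub_comm]; exact le_abs_self _
    have a3 : g N - g k ≤ |g N - g k| := le_abs_self _
    have : (∑ i ∈ Finset.Ico 0 j, |g (i+1) - g i|) + (∑ i ∈ Finset.Ico j k, |g (i+1) - g i|)
        + (∑ i ∈ Finset.Ico k N, |g (i+1) - g i|) = ∑ i ∈ Finset.Ico 0 N, |g (i+1) - g i| := by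
      rw [s1, s2]
    linarith
  · have s1 := Finset.sum_Ico_consecutive (fun i => |g (i+1) - g i|) (Nat.zero_le k) hkj
    have s2 := Finset.sum_Ico_consecutive (fun i => |g (i+1) - g i|) (Nat.zero_le j) hj
    have e1 := abs_telescope' g (Nat.zero_le k)
    have e2 := abs_telescope' g hkj
    have e3 := abs_telescope' g hj
    have a1 : g 0 - g k ≤ |g k - g 0| := by rw [abs_sub_comm]; exact le_abs_self _
    have a2 : g j - g k ≤ |g j - g k| := le_abs_self _
    have a3 : g j - g N ≤ |g N - g j| := by rw [abs_sub_comm]; exact le_abs_self _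
    have : (∑ i ∈ Finset.Ico 0 k, |g (i+1) - g i|) + (∑ i ∈ Finset.Ico k j, |g (i+1) - g i|)
        + (∑ i ∈ Finset.Ico j N, |g (i+1) - g i|) = ∑ i ∈ Finset.Ico 0 N, |g (i+1) - g i| := by
      rw [s1, s2]
    linarith

private lemma exists_high' {E : Type*} [NormedAddCommGroup E] [InnerProductSpace ℝ E]
    (K : Set E) (u c p : E) (hu : ‖u‖ = 1)
    (hbdd : Bornology.IsBounded (connectedComponentIn Kᶜ p))
    (hball : Metric.ball c 1 ⊆ connectedComponentIn Kᶜ p)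
    (r : ℝ) (hr : r < ⟪u, c⟫ + 1) : ∃ x ∈ K, r < ⟪u, x⟫ := by
  by_contra hcon
  push_neg at hcon
  set α := max (r - ⟪u, c⟫) 0 with hα
  have hα0 : 0 ≤ α := le_max_right _ _
  have hα1 : α < 1 := by
    apply max_lt (by linarith) one_pos
  set β := (α + 1)/2 with hβ
  have hβα : α < β := by rw [hβ]; linarith
  have hβ1 : β < 1 := by rw [hβ]; linarith
  have hβ0 : 0 ≤ β := by linarith
  set q := c + β • u with hq
  have hqball : q ∈ Metric.ball c 1 := by
    rw [Metric.mem_ball, dist_eq_norm]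
    simp only [hq, add_sub_cancel_left, norm_smul, hu, mul_one, Real.norm_eq_abs]
    rwa [abs_of_nonneg hβ0]
  have hqin : ⟪u, q⟫ > r := by
    have : ⟪u, q⟫ = ⟪u, c⟫ + β * ‖u‖^2 := by
      simp [hq, inner_add_right, real_inner_smul_right, real_inner_self_eq_norm_sq]
    rw [this, hu]
    have : r - ⟪u, c⟫ ≤ α := le_max_left _ _
    nlinarith
  -- the ray
  set R := (fun s : ℝ => q + s • u) '' Set.Ici 0 with hR
  have hRcompl : R ⊆ Kᶜ := by
    rintro x ⟨s, hs, rfl⟩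
    intro hxK
    have h1 := hcon _ hxK
    have : ⟪u, q + s • u⟫ = ⟪u, q⟫ + s * ‖u‖^2 := by
      simp [inner_add_right, real_inner_smul_right, real_inner_self_eq_norm_sq]
    rw [this, hu] at h1
    have : (0:ℝ) ≤ s := hs
    nlinarith
  have hRconn : IsPreconnected R :=
    (isPreconnected_Ici).image _ (Continuous.continuousOn (by continuity))
  have hqR : q ∈ R := ⟨0, Set.self_mem_Ici, by simp⟩
  have hsub : R ⊆ connectedComponentIn Kᶜ q :=
    hRconn.subset_connectedComponentIn hqR hRcompl
  have hcomp : connectedComponentIn Kᶜ p = connectedComponentIn Kᶜ q :=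
    connectedComponentIn_eq (hball hqball)
  have hRsub : R ⊆ connectedComponentIn Kᶜ p := by rw [hcomp]; exact hsub
  obtain ⟨M, hM⟩ := isBounded_iff_forall_norm_le.1 (hbdd.subset hRsub)
  have hM0 : ‖q‖ ≤ M := hM q hqR
  have hs0 : (0:ℝ) ≤ M + ‖q‖ + 1 := by linarith [norm_nonneg q]
  have hx : q + (M + ‖q‖ + 1) • u ∈ R := ⟨M + ‖q‖ + 1, hs0, rfl⟩
  have h2 := hM _ hx
  have h3 : (M + ‖q‖ + 1) = ‖(M + ‖q‖ + 1) • u‖ := by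
    rw [norm_smul, hu, mul_one, Real.norm_eq_abs, abs_of_nonneg hs0]
  have h4 : ‖(M + ‖q‖ + 1) • u‖ ≤ ‖q + (M + ‖q‖ + 1) • u‖ + ‖q‖ := by
    have := norm_sub_le (q + (M + ‖q‖ + 1) • u) q
    simp only [add_sub_cancel_left] at this
    linarith
  linarith [norm_nonneg q]

private def ee (θ : ℝ) : EuclideanSpace ℝ (Fin 2) :=
  (WithLp.equiv 2 (Fin 2 → ℝ)).symm ![Real.cos θ, Real.sin θ]

private lemma inner_ee (θ : ℝ) (v : EuclideanSpace ℝ (Fin 2)) :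
    ⟪ee θ, v⟫ = Real.cos θ * v 0 + Real.sin θ * v 1 := by
  rw [PiLp.inner_apply, Fin.sum_univ_two]; simp only [RCLike.inner_apply', conj_trivial]; rfl

private lemma norm_ee (θ : ℝ) : ‖ee θ‖ = 1 := by
  rw [EuclideanSpace.norm_eq, Fin.sum_univ_two]
  rw [show ee θ 0 = Real.cos θ from rfl, show ee θ 1 = Real.sin θ from rfl]
  simp [Real.norm_eq_abs, sq_abs, Real.cos_sq_add_sin_sq]

private lemma cont_inner_ee (v : EuclideanSpace ℝ (Fin 2)) :
    Continuous fun θ => |⟪ee θ, v⟫| := by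
  rw [show (fun θ => |⟪ee θ, v⟫|) = fun θ => |Real.cos θ * v 0 + Real.sin θ * v 1| from
    funext fun θ => by rw [inner_ee]]
  exact ((continuous_cos.mul continuous_const).add (continuous_sin.mul continuous_const)).abs

private lemma abs_inner_ee_le (θ : ℝ) (v : EuclideanSpace ℝ (Fin 2)) : |⟪ee θ, v⟫| ≤ ‖v‖ := by
  have := abs_real_inner_le_norm (ee θ) v
  rwa [norm_ee, one_mul] at this

private lemma key_integral_vec (v : EuclideanSpace ℝ (Fin 2)) :
    (∫ θ in (0:ℝ)..(2*π), |⟪ee θ, v⟫|) = 4 * ‖v‖ := by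
  have h1 : (∫ θ in (0:ℝ)..(2*π), |⟪ee θ, v⟫|)
      = ∫ θ in (0:ℝ)..(2*π), |v 0 * Real.cos θ + v 1 * Real.sin θ| := by
    apply integral_congr
    intro θ _
    show |⟪ee θ, v⟫| = _
    rw [inner_ee]; ring_nf
  rw [h1, key_integral' (v 0) (v 1)]
  congr 1
  rw [EuclideanSpace.norm_eq, Fin.sum_univ_two, Real.norm_eq_abs, Real.norm_eq_abs,
    sq_abs, sq_abs]

/-- **Two-disk lower bound** (Section 6).  If a closed plane curve has two open unit
balls, with centres at distance at least `2`, each contained in some bounded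
complementary component, then its length is at least `4 + 2π`. -/
theorem length_ge_of_two_unit_balls
    (γ : ℝ → EuclideanSpace ℝ (Fin 2))
    (hγ : ContinuousOn γ (Set.Icc 0 1)) (hloop : γ 0 = γ 1)
    (K : Set (EuclideanSpace ℝ (Fin 2))) (hK : K = γ '' Set.Icc 0 1)
    (c₁ c₂ : EuclideanSpace ℝ (Fin 2)) (hdist : 2 ≤ dist c₁ c₂)
    (h₁ : ∃ p ∉ K, Bornology.IsBounded (connectedComponentIn Kᶜ p) ∧
      Metric.ball c₁ 1 ⊆ connectedComponentIn Kᶜ p)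
    (h₂ : ∃ p ∉ K, Bornology.IsBounded (connectedComponentIn Kᶜ p) ∧
      Metric.ball c₂ 1 ⊆ connectedComponentIn Kᶜ p) :
    ENNReal.ofReal (4 + 2 * Real.pi) ≤ eVariationOn γ (Set.Icc 0 1) := by
  obtain ⟨p₁, hp₁K, hb₁, hball₁⟩ := h₁
  obtain ⟨p₂, hp₂K, hb₂, hball₂⟩ := h₂
  set L := eVariationOn γ (Set.Icc 0 1) with hLdef
  by_cases hL : L = ⊤
  · rw [hL]; exact le_top
  rw [ENNReal.ofReal_le_iff_le_toReal hL]
  set w : EuclideanSpace ℝ (Fin 2) := c₁ - c₂ with hw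
  set d : ℝ := ‖w‖ with hd
  have hd2 : 2 ≤ d := by rwa [dist_eq_norm] at hdist
  -- Step A : extremes of the projection in any unit direction
  have stepA : ∀ u : EuclideanSpace ℝ (Fin 2), ‖u‖ = 1 →
      ∃ A B, A ∈ Set.Icc (0:ℝ) 1 ∧ B ∈ Set.Icc (0:ℝ) 1 ∧
        (∀ t ∈ Set.Icc (0:ℝ) 1, ⟪u, γ t⟫ ≤ ⟪u, γ A⟫) ∧
        (∀ t ∈ Set.Icc (0:ℝ) 1, ⟪u, γ B⟫ ≤ ⟪u, γ t⟫) ∧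
        2 + |⟪u, w⟫| ≤ ⟪u, γ A⟫ - ⟪u, γ B⟫ := by
    intro u hu
    have hf : ContinuousOn (fun t => ⟪u, γ t⟫) (Set.Icc (0:ℝ) 1) :=
      ContinuousOn.inner continuousOn_const hγ
    obtain ⟨A, hA, hmax⟩ := isCompact_Icc.exists_isMaxOn ⟨0, by norm_num⟩ hf
    obtain ⟨B, hB, hmin⟩ := isCompact_Icc.exists_isMinOn ⟨0, by norm_num⟩ hf
    have hmax' : ∀ t ∈ Set.Icc (0:ℝ) 1, ⟪u, γ t⟫ ≤ ⟪u, γ A⟫ := fun t ht => hmax ht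
    have hmin' : ∀ t ∈ Set.Icc (0:ℝ) 1, ⟪u, γ B⟫ ≤ ⟪u, γ t⟫ := fun t ht => hmin ht
    refine ⟨A, B, hA, hB, hmax', hmin', ?_⟩
    -- the maximum is above both centres +1
    have hup : ∀ (c : EuclideanSpace ℝ (Fin 2)) (p : EuclideanSpace ℝ (Fin 2)),
        Bornology.IsBounded (connectedComponentIn Kᶜ p) →
        Metric.ball c 1 ⊆ connectedComponentIn Kᶜ p →
        ⟪u, c⟫ + 1 ≤ ⟪u, γ A⟫ := by
      intro c p hbdd hball
      by_contra hcontra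
      push_neg at hcontra
      obtain ⟨x, hxK, hgt⟩ := exists_high' K u c p hu hbdd hball (⟪u, γ A⟫) hcontra
      rw [hK] at hxK
      obtain ⟨t, ht, rfl⟩ := hxK
      exact absurd (hmax' t ht) (not_le.2 hgt)
    have hdown : ∀ (c : EuclideanSpace ℝ (Fin 2)) (p : EuclideanSpace ℝ (Fin 2)),
        Bornology.IsBounded (connectedComponentIn Kᶜ p) →
        Metric.ball c 1 ⊆ connectedComponentIn Kᶜ p →
        ⟪u, γ B⟫ ≤ ⟪u, c⟫ - 1 := by
      intro c p hbdd hball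
      by_contra hcontra
      push_neg at hcontra
      have hu' : ‖-u‖ = 1 := by rwa [norm_neg]
      have hr : -⟪u, γ B⟫ < ⟪-u, c⟫ + 1 := by
        rw [inner_neg_left]; linarith
      obtain ⟨x, hxK, hgt⟩ := exists_high' K (-u) c p hu' hbdd hball (-⟪u, γ B⟫) hr
      rw [inner_neg_left] at hgt
      rw [hK] at hxK
      obtain ⟨t, ht, rfl⟩ := hxK
      have := hmin' t ht
      linarith
    have h1u := hup c₁ p₁ hb₁ hball₁
    have h2u := hup c₂ p₂ hb₂ hball₂
    have h1d := hdown c₁ p₁ hb₁ hball₁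
    have h2d := hdown c₂ p₂ hb₂ hball₂
    have hinner : ⟪u, w⟫ = ⟪u, c₁⟫ - ⟪u, c₂⟫ := by rw [hw, inner_sub_right]
    rcases abs_cases (⟪u, c₁⟫ - ⟪u, c₂⟫) with ⟨habs, _⟩ | ⟨habs, _⟩ <;>
      rw [hinner, habs] <;> linarith
  -- Step B : lower bound for every ε > 0
  have main : ∀ ε : ℝ, 0 < ε → 8*π + 8*d ≤ 4 * L.toReal + 8*π*ε := by
    intro ε hε
    have hUC := isCompact_Icc.uniformContinuousOn_of_continuous hγ
    rw [Metric.uniformContinuousOn_iff] at hUC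
    obtain ⟨δ, hδ0, hδ⟩ := hUC ε hε
    set N : ℕ := ⌊1/δ⌋₊ + 1 with hN
    have hN0 : (0:ℝ) < N := by positivity
    have hNδ : 1/(N:ℝ) < δ := by
      have h1 : 1/δ < (N:ℝ) := by
        rw [hN]; push_cast; exact Nat.lt_floor_add_one (1/δ)
      rw [div_lt_iff₀ hδ0] at h1
      rw [div_lt_iff₀ hN0]
      have := mul_comm (N:ℝ) δ
      linarith
    set t : ℕ → ℝ := fun i => (min i N : ℝ)/N with ht
    have htmono : Monotone t := by
      intro i j hij
      show min (i:ℝ) (N:ℝ) / N ≤ min (j:ℝ) (N:ℝ) / N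
      gcongr <;> first
        | exact min_le_min (Nat.cast_le.2 hij) le_rfl
        | skip
    have htmem : ∀ i, t i ∈ Set.Icc (0:ℝ) 1 := by
      intro i
      constructor
      · exact div_nonneg (le_min (Nat.cast_nonneg i) (le_of_lt hN0)) (le_of_lt hN0)
      · rw [ht]
        show min (i:ℝ) (N:ℝ) / N ≤ 1
        rw [div_le_one hN0]
        exact min_le_right _ _
    have ht0 : t 0 = 0 := by simp [ht]
    have htN : t N = 1 := by
      rw [ht]; simp only [min_self]
      field_simp
    have htj : ∀ j ≤ N, t j = (j:ℝ)/N := by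
      intro j hj
      show min (j:ℝ) (N:ℝ) / N = (j:ℝ)/N
      rw [min_eq_left (by exact_mod_cast hj)]
    set v : ℕ → EuclideanSpace ℝ (Fin 2) := fun i => γ (t (i+1)) - γ (t i) with hv
    -- the total length of the grid polygon is at most L
    have hsum_le : ∑ i ∈ Finset.range N, ‖v i‖ ≤ L.toReal := by
      rw [← ENNReal.ofReal_le_iff_le_toReal hL,
        ENNReal.ofReal_sum_of_nonneg (fun i _ => norm_nonneg _)]
      have := eVariationOn.sum_le (f := γ) (n := N) htmono htmem
      refine le_trans (le_of_eq ?_) this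
      apply Finset.sum_congr rfl
      intro i _
      rw [edist_dist, dist_eq_norm]
    -- pointwise lower bound on the projected polygon variation
    have hpt : ∀ θ ∈ Set.Icc (0:ℝ) (2*π),
        4 + 2*|⟪ee θ, w⟫| - 4*ε ≤ ∑ i ∈ Finset.range N, |⟪ee θ, v i⟫| := by
      intro θ _
      obtain ⟨A, B, hA, hB, hmax, hmin, hgap⟩ := stepA (ee θ) (norm_ee θ)
      set j : ℕ := ⌊A*N⌋₊ with hj
      set k : ℕ := ⌊B*N⌋₊ with hk
      have hjN : j ≤ N := by
        have h1 : A*(N:ℝ) ≤ ((N:ℕ):ℝ) := by nlinarith [hA.2, hN0]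
        have h2 := Nat.floor_mono h1
        rwa [Nat.floor_natCast] at h2
      have hkN : k ≤ N := by
        have h1 : B*(N:ℝ) ≤ ((N:ℕ):ℝ) := by nlinarith [hB.2, hN0]
        have h2 := Nat.floor_mono h1
        rwa [Nat.floor_natCast] at h2
      have hgrid_close : ∀ (x : ℝ), x ∈ Set.Icc (0:ℝ) 1 →
          dist x ((⌊x*N⌋₊ : ℝ)/N) < δ := by
        intro x hx
        have h1 : (⌊x*N⌋₊ : ℝ) ≤ x*N := Nat.floor_le (by nlinarith [hx.1, hN0])
        have h2 : x*N < ⌊x*N⌋₊ + 1 := Nat.lt_floor_add_one _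
        rw [Real.dist_eq, abs_of_nonneg (by rw [sub_nonneg, div_le_iff₀ hN0]; linarith)]
        have h3 : x < ((⌊x*N⌋₊:ℝ) + 1)/N := by rw [lt_div_iff₀ hN0]; linarith
        have h4 : ((⌊x*N⌋₊:ℝ)+1)/N = (⌊x*N⌋₊:ℝ)/N + 1/N := by ring
        linarith
      have hclose : ∀ x ∈ Set.Icc (0:ℝ) 1, dist (γ x) (γ ((⌊x*N⌋₊:ℝ)/N)) < ε := by
        intro x hx
        refine hδ x hx _ ⟨by positivity, ?_⟩ (hgrid_close x hx)
        rw [div_le_one hN0]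
        calc (⌊x*N⌋₊:ℝ) ≤ x*N := Nat.floor_le (by nlinarith [hx.1, hN0])
          _ ≤ N := by nlinarith [hx.2, hN0]
      set g : ℕ → ℝ := fun i => ⟪ee θ, γ (t i)⟫ with hg
      have hg0 : g 0 = g N := by rw [hg]; simp only [ht0, htN, hloop]
      have hgrid := grid_ineq' g N j k hg0 hjN hkN
      have hsum_eq : (∑ i ∈ Finset.range N, |g (i+1) - g i|)
          = ∑ i ∈ Finset.range N, |⟪ee θ, v i⟫| := by
        apply Finset.sum_congr rfl
        intro i _
        rw [hg, hv]
        simp only [inner_sub_right]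
      have hgj : ⟪ee θ, γ A⟫ - ε ≤ g j := by
        have h' : |g j - ⟪ee θ, γ A⟫| < ε := by
          calc |g j - ⟪ee θ, γ A⟫| = |⟪ee θ, γ (t j) - γ A⟫| := by rw [hg, inner_sub_right]
            _ ≤ ‖γ (t j) - γ A‖ := abs_inner_ee_le _ _
            _ = dist (γ (t j)) (γ A) := (dist_eq_norm _ _).symm
            _ = dist (γ A) (γ (t j)) := dist_comm _ _
            _ < ε := by rw [htj j hjN]; exact hclose A hA
        have := abs_lt.1 h'
        linarith [this.1, this.2]
      have hgk : g k ≤ ⟪ee θ, γ B⟫ + ε := by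
        have h' : |g k - ⟪ee θ, γ B⟫| < ε := by
          calc |g k - ⟪ee θ, γ B⟫| = |⟪ee θ, γ (t k) - γ B⟫| := by rw [hg, inner_sub_right]
            _ ≤ ‖γ (t k) - γ B‖ := abs_inner_ee_le _ _
            _ = dist (γ (t k)) (γ B) := (dist_eq_norm _ _).symm
            _ = dist (γ B) (γ (t k)) := dist_comm _ _
            _ < ε := by rw [htj k hkN]; exact hclose B hB
        have := abs_lt.1 h'
        linarith [this.1, this.2]
      rw [← hsum_eq]
      linarith
    -- integrate the pointwise bound over [0, 2π]
    have hS_int : IntervalIntegrable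
        (fun θ => ∑ i ∈ Finset.range N, |⟪ee θ, v i⟫|) MeasureTheory.volume 0 (2*π) :=
      (continuous_finset_sum _ fun i _ => cont_inner_ee (v i)).intervalIntegrable _ _
    have hH_int : IntervalIntegrable
        (fun θ => 4 + 2*|⟪ee θ, w⟫| - 4*ε) MeasureTheory.volume 0 (2*π) := by
      apply Continuous.intervalIntegrable
      have := cont_inner_ee w
      continuity
    have hintS : (∫ θ in (0:ℝ)..(2*π), ∑ i ∈ Finset.range N, |⟪ee θ, v i⟫|)
        = 4 * ∑ i ∈ Finset.range N, ‖v i‖ := by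
      rw [integral_finset_sum (fun i _ => (cont_inner_ee (v i)).intervalIntegrable _ _),
        Finset.mul_sum]
      exact Finset.sum_congr rfl fun i _ => key_integral_vec (v i)
    have hintH : (∫ θ in (0:ℝ)..(2*π), (4 + 2*|⟪ee θ, w⟫| - 4*ε))
        = 8*π + 8*d - 8*π*ε := by
      have h1 : (fun θ => 4 + 2*|⟪ee θ, w⟫| - 4*ε)
          = fun θ => (4 - 4*ε) + 2*|⟪ee θ, w⟫| := funext fun θ => by ring
      rw [h1, integral_add (g := fun θ => 2*|⟪ee θ, w⟫|) intervalIntegrable_const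
        ((continuous_const.mul (cont_inner_ee w)).intervalIntegrable _ _),
        integral_const, integral_const_mul, key_integral_vec w]
      rw [smul_eq_mul, ← hd]
      ring
    have hmono := integral_mono_on (by positivity : (0:ℝ) ≤ 2*π) hH_int hS_int hpt
    rw [hintH, hintS] at hmono
    linarith
  -- conclusion
  have h8 : 8*π + 8*d ≤ 4 * L.toReal := by
    apply le_of_forall_pos_le_add
    intro ε' hε'
    have hmain := main (ε'/(8*π+1)) (by positivity)
    have hπ : (0:ℝ) < π := pi_pos
    have : 8*π*(ε'/(8*π+1)) ≤ ε' := by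
      rw [mul_div_assoc']
      rw [div_le_iff₀ (by positivity)]
      nlinarith
    linarith
  have hπ : (0:ℝ) < π := pi_pos
  linarith

end
end

section
/- Let σ : [0,1] → ℝ² be a continuous curve with ‖σ(t)‖ ≥ 1 for all t ∈ [0,1]. Then the length of σ (its total variation) is at least the angle between σ(0) and σ(1), i.e. at least arccos(⟨σ(0)/‖σ(0)‖, σ(1)/‖σ(1)‖⟩). In particular, a curve joining two points of the unit circle while remaining outside its open disk is at least as long as the shorter arc of the unit circle between those points. -/
open scoped ENNReal RealInnerProductSpace
open Real

noncomputable section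

lemma arccos_antitone' : Antitone Real.arccos := fun x y h => by
  unfold Real.arccos; have := Real.monotone_arcsin h; linarith

/-- spherical triangle inequality for arccos of inner products of unit vectors -/
lemma triangle_arccos' {E : Type*} [NormedAddCommGroup E] [InnerProductSpace ℝ E]
    {u v w : E} (hu : ‖u‖ = 1) (hv : ‖v‖ = 1) (hw : ‖w‖ = 1) :
    Real.arccos ⟪u, w⟫ ≤ Real.arccos ⟪u, v⟫ + Real.arccos ⟪v, w⟫ := by
  set c₁ := ⟪u, v⟫ with hc₁
  set c₂ := ⟪v, w⟫ with hc₂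
  set a := Real.arccos c₁ with ha
  set b := Real.arccos c₂ with hb
  rcases le_or_gt π (a + b) with h | h
  · exact le_trans (Real.arccos_le_pi _) h
  · have habs1 : |c₁| ≤ 1 := by
      simpa [hc₁, hu, hv] using abs_real_inner_le_norm u v
    have habs2 : |c₂| ≤ 1 := by
      simpa [hc₂, hv, hw] using abs_real_inner_le_norm v w
    have h1l := neg_le_of_abs_le habs1
    have h1r := le_of_abs_le habs1
    have h2l := neg_le_of_abs_le habs2
    have h2r := le_of_abs_le habs2
    have hvu : ⟪v, u⟫ = c₁ := by rw [real_inner_comm]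
    have huv : ⟪u, v⟫ = c₁ := hc₁.symm
    have hwv : ⟪w, v⟫ = c₂ := by rw [real_inner_comm]
    have hvw : ⟪v, w⟫ = c₂ := hc₂.symm
    have huu : ⟪u, u⟫ = (1:ℝ) := by rw [real_inner_self_eq_norm_sq, hu]; norm_num
    have hvv : ⟪v, v⟫ = (1:ℝ) := by rw [real_inner_self_eq_norm_sq, hv]; norm_num
    have hww : ⟪w, w⟫ = (1:ℝ) := by rw [real_inner_self_eq_norm_sq, hw]; norm_num
    have hnu : ‖u - c₁ • v‖ = Real.sqrt (1 - c₁ ^ 2) := by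
      rw [← Real.sqrt_sq (norm_nonneg (u - c₁ • v)), ← real_inner_self_eq_norm_sq]
      have e : ⟪u - c₁ • v, u - c₁ • v⟫ = 1 - c₁ ^ 2 := by
        simp only [inner_sub_left, inner_sub_right, real_inner_smul_left,
          real_inner_smul_right, hvu, huv, huu, hvv]
        ring
      rw [e]
    have hnw : ‖w - c₂ • v‖ = Real.sqrt (1 - c₂ ^ 2) := by
      rw [← Real.sqrt_sq (norm_nonneg (w - c₂ • v)), ← real_inner_self_eq_norm_sq]
      have e : ⟪w - c₂ • v, w - c₂ • v⟫ = 1 - c₂ ^ 2 := by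
        simp only [inner_sub_left, inner_sub_right, real_inner_smul_left,
          real_inner_smul_right, hwv, hvw, hww, hvv]
        ring
      rw [e]
    have hinner : ⟪u - c₁ • v, w - c₂ • v⟫ = ⟪u, w⟫ - c₁ * c₂ := by
      simp only [inner_sub_left, inner_sub_right, real_inner_smul_left,
        real_inner_smul_right, huv, hvw, hvv]
      ring
    have hcs : -(‖u - c₁ • v‖ * ‖w - c₂ • v‖) ≤ ⟪u - c₁ • v, w - c₂ • v⟫ :=
      neg_le_of_abs_le (abs_real_inner_le_norm _ _)
    have hkey : Real.cos (a + b) ≤ ⟪u, w⟫ := by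
      rw [Real.cos_add, ha, hb, Real.cos_arccos h1l h1r, Real.cos_arccos h2l h2r,
        Real.sin_arccos, Real.sin_arccos]
      rw [hnu, hnw, hinner] at hcs
      linarith
    have h0ab : 0 ≤ a + b := by
      have := Real.arccos_nonneg c₁; have := Real.arccos_nonneg c₂; linarith
    calc Real.arccos ⟪u, w⟫ ≤ Real.arccos (Real.cos (a + b)) := arccos_antitone' hkey
      _ = a + b := Real.arccos_cos h0ab h.le

/-- chord length bound for points outside the unit disk -/
lemma chord_ge' {E : Type*} [NormedAddCommGroup E] [InnerProductSpace ℝ E]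
    {x y : E} (hx : 1 ≤ ‖x‖) (hy : 1 ≤ ‖y‖) :
    2 * Real.sin (Real.arccos ⟪‖x‖⁻¹ • x, ‖y‖⁻¹ • y⟫ / 2) ≤ ‖x - y‖ := by
  set c := ⟪‖x‖⁻¹ • x, ‖y‖⁻¹ • y⟫ with hc
  have hx0 : (0:ℝ) < ‖x‖ := lt_of_lt_of_le one_pos hx
  have hy0 : (0:ℝ) < ‖y‖ := lt_of_lt_of_le one_pos hy
  have hxn : ‖x‖ ≠ 0 := ne_of_gt hx0
  have hyn : ‖y‖ ≠ 0 := ne_of_gt hy0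
  have hunitx : ‖‖x‖⁻¹ • x‖ = 1 := by
    rw [norm_smul, norm_inv, norm_norm, inv_mul_cancel₀ hxn]
  have hunity : ‖‖y‖⁻¹ • y‖ = 1 := by
    rw [norm_smul, norm_inv, norm_norm, inv_mul_cancel₀ hyn]
  have habs : |c| ≤ 1 := by
    simpa [hc, hunitx, hunity] using abs_real_inner_le_norm (‖x‖⁻¹ • x) (‖y‖⁻¹ • y)
  have hcin : ⟪x, y⟫ = ‖x‖ * ‖y‖ * c := by
    rw [hc, real_inner_smul_left, real_inner_smul_right]
    field_simp
  have hcosθ : Real.cos (Real.arccos c) = c :=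
    Real.cos_arccos (neg_le_of_abs_le habs) (le_of_abs_le habs)
  have hsq : (2 * Real.sin (Real.arccos c / 2)) ^ 2 = 2 - 2 * c := by
    have h1 : Real.sin (Real.arccos c / 2) ^ 2 = 1 - Real.cos (Real.arccos c / 2) ^ 2 :=
      Real.sin_sq _
    have h2 : Real.cos (Real.arccos c / 2) ^ 2
        = 1 / 2 + Real.cos (2 * (Real.arccos c / 2)) / 2 := Real.cos_sq _
    have h3 : 2 * (Real.arccos c / 2) = Real.arccos c := by ring
    rw [h3, hcosθ] at h2
    nlinarith
  have hsin_nonneg : 0 ≤ Real.sin (Real.arccos c / 2) :=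
    Real.sin_nonneg_of_nonneg_of_le_pi
      (by linarith [Real.arccos_nonneg c])
      (by linarith [Real.arccos_le_pi c, Real.pi_pos])
  have hnorm_sq : ‖x - y‖ ^ 2 = ‖x‖ ^ 2 + ‖y‖ ^ 2 - 2 * (‖x‖ * ‖y‖ * c) := by
    rw [← hcin, @norm_sub_sq_real]; ring
  have hge : 2 - 2 * c ≤ ‖x - y‖ ^ 2 := by
    rw [hnorm_sq]
    have hab : (1:ℝ) ≤ ‖x‖ * ‖y‖ := by nlinarith
    have hc1 : c ≤ 1 := le_of_abs_le habs
    have hprod : (0:ℝ) ≤ (‖x‖ * ‖y‖ - 1) * (1 - c) :=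
      mul_nonneg (by linarith) (by linarith)
    nlinarith [sq_nonneg (‖x‖ - ‖y‖)]
  calc 2 * Real.sin (Real.arccos c / 2)
      = Real.sqrt ((2 * Real.sin (Real.arccos c / 2)) ^ 2) :=
        (Real.sqrt_sq (by linarith)).symm
    _ ≤ Real.sqrt (‖x - y‖ ^ 2) := Real.sqrt_le_sqrt (by rw [hsq]; exact hge)
    _ = ‖x - y‖ := Real.sqrt_sq (norm_nonneg _)

lemma sub_cube_le_two_sin' {s : ℝ} (h0 : 0 ≤ s) (h1 : s ≤ 1) :
    s - s ^ 3 ≤ 2 * Real.sin (s / 2) := by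
  rcases eq_or_lt_of_le h0 with h | h
  · simp [← h]
  · have hc := Real.sin_gt_sub_cube (by linarith : (0:ℝ) < s / 2)
    have he : (s / 2) ^ 3 / 6 = s ^ 3 / 48 := by ring
    have h3 : (0:ℝ) ≤ s ^ 3 := by positivity
    rw [he] at hc
    linarith

/-- **Radial projection reduces length** (used in the Meeks–Yau exchange and round-off
argument in Theorem 3.3).  A continuous curve staying outside the open unit disk is at
least as long as the angle between its endpoints, i.e. the shorter arc of the unit
circle between their radial projections. -/
theorem length_ge_arccos_of_outside_unit_disk
    (σ : ℝ → EuclideanSpace ℝ (Fin 2))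
    (hσ : ContinuousOn σ (Set.Icc 0 1))
    (hout : ∀ t ∈ Set.Icc (0 : ℝ) 1, 1 ≤ ‖σ t‖) :
    ENNReal.ofReal
        (Real.arccos ⟪‖σ 0‖⁻¹ • σ 0, ‖σ 1‖⁻¹ • σ 1⟫)
      ≤ eVariationOn σ (Set.Icc 0 1) := by
  classical
  have hunit : ∀ t ∈ Set.Icc (0:ℝ) 1, ‖‖σ t‖⁻¹ • σ t‖ = 1 := by
    intro t ht
    have h0 : ‖σ t‖ ≠ 0 := ne_of_gt (lt_of_lt_of_le one_pos (hout t ht))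
    rw [norm_smul, norm_inv, norm_norm, inv_mul_cancel₀ h0]
  set g : ℝ → ℝ := fun t => Real.arccos ⟪‖σ 0‖⁻¹ • σ 0, ‖σ t‖⁻¹ • σ t⟫ with hg
  have h01 : (0:ℝ) ∈ Set.Icc (0:ℝ) 1 := by norm_num
  have h11 : (1:ℝ) ∈ Set.Icc (0:ℝ) 1 := by norm_num
  have habsg : ∀ s ∈ Set.Icc (0:ℝ) 1, ∀ t ∈ Set.Icc (0:ℝ) 1,
      |g s - g t| ≤ Real.arccos ⟪‖σ s‖⁻¹ • σ s, ‖σ t‖⁻¹ • σ t⟫ := by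
    intro s hs t ht
    rw [abs_sub_le_iff]
    constructor
    · have h1 := triangle_arccos' (hunit 0 h01) (hunit t ht) (hunit s hs)
      have h2 : ⟪‖σ t‖⁻¹ • σ t, ‖σ s‖⁻¹ • σ s⟫ = ⟪‖σ s‖⁻¹ • σ s, ‖σ t‖⁻¹ • σ t⟫ :=
        real_inner_comm _ _
      rw [h2] at h1
      simp only [hg]
      linarith
    · have h1 := triangle_arccos' (hunit 0 h01) (hunit s hs) (hunit t ht)
      simp only [hg]
      linarith
  have hpair : ∀ s ∈ Set.Icc (0:ℝ) 1, ∀ t ∈ Set.Icc (0:ℝ) 1,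
      2 * Real.sin (|g s - g t| / 2) ≤ dist (σ s) (σ t) := by
    intro s hs t ht
    have h1 := habsg s hs t ht
    have hd := chord_ge' (hout s hs) (hout t ht)
    rw [dist_eq_norm]
    refine le_trans ?_ hd
    have harc := Real.arccos_le_pi ⟪‖σ s‖⁻¹ • σ s, ‖σ t‖⁻¹ • σ t⟫
    have habs0 := abs_nonneg (g s - g t)
    have hmono := Real.strictMonoOn_sin.monotoneOn
      (Set.mem_Icc.2 ⟨by linarith [Real.pi_pos], by linarith⟩)
      (Set.mem_Icc.2 ⟨by linarith [Real.pi_pos], by linarith⟩)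
      (by linarith : |g s - g t| / 2 ≤ Real.arccos ⟪‖σ s‖⁻¹ • σ s, ‖σ t‖⁻¹ • σ t⟫ / 2)
    linarith
  -- g 0 = 0
  have hg0 : g 0 = 0 := by
    have : ⟪‖σ 0‖⁻¹ • σ 0, ‖σ 0‖⁻¹ • σ 0⟫ = (1:ℝ) := by
      rw [real_inner_self_eq_norm_sq, hunit 0 h01]; norm_num
    simp only [hg, this, Real.arccos_one]
  have hA0 : 0 ≤ g 1 := Real.arccos_nonneg _
  have hAπ : g 1 ≤ π := Real.arccos_le_pi _
  -- continuity of g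
  have hgc : ContinuousOn g (Set.Icc 0 1) := by
    apply Real.continuous_arccos.comp_continuousOn
    apply ContinuousOn.inner continuousOn_const
    exact ContinuousOn.smul
      (ContinuousOn.inv₀ hσ.norm
        (fun t ht => ne_of_gt (lt_of_lt_of_le one_pos (hout t ht)))) hσ
  show ENNReal.ofReal (g 1) ≤ eVariationOn σ (Set.Icc 0 1)
  apply ENNReal.le_of_forall_pos_le_add
  intro ε hε _
  have hεR : (0:ℝ) < (ε:ℝ) := hε
  set ε' : ℝ := min 1 ((ε:ℝ) / (π + 1)) with hε'def
  have hπ := Real.pi_pos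
  have hε'0 : 0 < ε' := lt_min one_pos (by positivity)
  have hε'1 : ε' ≤ 1 := min_le_left _ _
  have hε'ε : ε' * π ≤ (ε:ℝ) := by
    have h1 : ε' ≤ (ε:ℝ) / (π + 1) := min_le_right _ _
    have : ε' * π ≤ ((ε:ℝ) / (π + 1)) * π := by nlinarith
    calc ε' * π ≤ ((ε:ℝ) / (π + 1)) * π := this
      _ ≤ (ε:ℝ) := by rw [div_mul_eq_mul_div, div_le_iff₀ (by linarith)]; nlinarith
  -- uniform continuity
  have hUC := isCompact_Icc.uniformContinuousOn_of_continuous hgc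
  rw [Metric.uniformContinuousOn_iff] at hUC
  obtain ⟨δ, hδ, hδ'⟩ := hUC ε' hε'0
  obtain ⟨N, hN⟩ := exists_nat_gt (1 / δ)
  have hN1 : (0:ℝ) < (N:ℝ) + 1 := by positivity
  have hgap0 : (1:ℝ) / ((N:ℝ) + 1) < δ := by
    have h2 : 1 < δ * ((N:ℝ) + 1) := by
      rw [div_lt_iff₀ hδ] at hN
      nlinarith
    rw [div_lt_iff₀ hN1]
    linarith
  set u : ℕ → ℝ := fun i => min ((i:ℝ) / ((N:ℝ) + 1)) 1 with hu_def
  have hu : Monotone u := by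
    intro i j hij
    have hij' : (i:ℝ) ≤ (j:ℝ) := by exact_mod_cast hij
    exact min_le_min (by gcongr) le_rfl
  have hus : ∀ i, u i ∈ Set.Icc (0:ℝ) 1 := by
    intro i
    exact ⟨le_min (by positivity) zero_le_one, min_le_right _ _⟩
  have hu0 : u 0 = 0 := by simp [hu_def]
  have huN : u (N + 1) = 1 := by
    simp only [hu_def]
    push_cast
    rw [div_self (ne_of_gt hN1)]
    simp
  have hgap : ∀ i, u (i + 1) - u i ≤ 1 / ((N:ℝ) + 1) := by
    intro i
    have hh : (0:ℝ) ≤ 1 / ((N:ℝ) + 1) := by positivity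
    have h1 : u (i + 1) ≤ u i + 1 / ((N:ℝ) + 1) := by
      have h2 : u (i + 1) ≤ min ((i:ℝ) / ((N:ℝ) + 1) + 1 / ((N:ℝ) + 1))
          (1 + 1 / ((N:ℝ) + 1)) := by
        apply min_le_min _ (le_add_of_nonneg_right hh)
        apply le_of_eq
        push_cast
        ring
      rwa [min_add_add_right] at h2
    linarith
  -- per-step bounds
  set sfun : ℕ → ℝ := fun i => |g (u (i + 1)) - g (u i)| with hsfun
  have hsε : ∀ i, sfun i ≤ ε' := by
    intro i
    have hd : dist (u (i + 1)) (u i) < δ := by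
      rw [Real.dist_eq, abs_of_nonneg (by linarith [hu (Nat.le_succ i)] : 0 ≤ u (i+1) - u i)]
      linarith [hgap i]
    have := hδ' (u (i + 1)) (hus _) (u i) (hus _) hd
    rw [Real.dist_eq] at this
    exact this.le
  have hstep : ∀ i, (1 - ε' ^ 2) * sfun i ≤ dist (σ (u (i + 1))) (σ (u i)) := by
    intro i
    have hs0 : 0 ≤ sfun i := abs_nonneg _
    have hs1 : sfun i ≤ 1 := le_trans (hsε i) hε'1
    have h1 := sub_cube_le_two_sin' hs0 hs1
    have h2 := hpair (u (i + 1)) (hus _) (u i) (hus _)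
    have h3 : sfun i ^ 3 ≤ ε' ^ 2 * sfun i := by
      have h4 := hsε i
      have hsq : sfun i ^ 2 ≤ ε' ^ 2 := by nlinarith
      nlinarith [mul_le_mul_of_nonneg_left hsq hs0]
    simp only [hsfun] at h1 h2 ⊢
    nlinarith
  -- sum them up
  set S : ℝ := ∑ i ∈ Finset.range (N + 1), dist (σ (u (i + 1))) (σ (u i)) with hS
  have hsum : (1 - ε' ^ 2) * g 1 ≤ S := by
    have htel : g 1 = ∑ i ∈ Finset.range (N + 1), (g (u (i + 1)) - g (u i)) := by
      rw [Finset.sum_range_sub (fun i => g (u i)), hu0, huN, hg0, sub_zero]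
    have habs : g 1 ≤ ∑ i ∈ Finset.range (N + 1), sfun i := by
      calc g 1 = |∑ i ∈ Finset.range (N + 1), (g (u (i + 1)) - g (u i))| := by
            rw [← htel, abs_of_nonneg hA0]
        _ ≤ ∑ i ∈ Finset.range (N + 1), sfun i := Finset.abs_sum_le_sum_abs _ _
    have hfac : (0:ℝ) ≤ 1 - ε' ^ 2 := by nlinarith
    calc (1 - ε' ^ 2) * g 1 ≤ (1 - ε' ^ 2) * ∑ i ∈ Finset.range (N + 1), sfun i :=
          mul_le_mul_of_nonneg_left habs hfac
      _ = ∑ i ∈ Finset.range (N + 1), (1 - ε' ^ 2) * sfun i := Finset.mul_sum _ _ _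
      _ ≤ S := Finset.sum_le_sum (fun i _ => hstep i)
  have hfinal : g 1 ≤ S + (ε:ℝ) := by
    have h1 : ε' ^ 2 * g 1 ≤ ε' * π :=
      mul_le_mul (by nlinarith) hAπ hA0 hε'0.le
    linarith
  calc ENNReal.ofReal (g 1) ≤ ENNReal.ofReal (S + (ε:ℝ)) :=
        ENNReal.ofReal_le_ofReal hfinal
    _ ≤ ENNReal.ofReal S + ENNReal.ofReal (ε:ℝ) := ENNReal.ofReal_add_le
    _ = (∑ i ∈ Finset.range (N + 1), edist (σ (u (i + 1))) (σ (u i))) + (ε:ℝ≥0∞) := by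
        rw [hS, ENNReal.ofReal_sum_of_nonneg (fun i _ => dist_nonneg),
          ENNReal.ofReal_coe_nnreal]
        congr 1
        exact Finset.sum_congr rfl (fun i _ => (edist_dist _ _).symm)
    _ ≤ eVariationOn σ (Set.Icc 0 1) + (ε:ℝ≥0∞) :=
        add_le_add_left (eVariationOn.sum_le (f := σ) (n := N + 1) hu hus) _

end
end
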